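/- Fix integers n ≥ 2 and 1 ≤ d < n, and let 1 ≤ i ≤ d. There exists C > 0 such that for every v ∈ Λ^i ℝ^{d+1} with ‖v‖ = 1 and every r > 0, the d-dimensional Lebesgue measure of the set D^+(v, r) = { s ∈ I^d : ‖π_+(u(s)v)‖ ≤ r } is less than C·r^i. -/

import Mathlib

open Matrix MeasureTheory Filter
open scoped ENNReal NNReal

noncomputable section

/-! ## Exterior powers in coordinates -/

/-- Index set for the standard wedge basis of Λ^k ℝ^m : k-element subsets of {0,…,m−1}. -/
abbrev Idx (m k : ℕ) := {J : Finset (Fin m) // J.card = k}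

/-- Model for the k-th exterior power of ℝ^m, with its sup norm w.r.t. the wedge basis. -/
abbrev Lam (m k : ℕ) := Idx m k → ℝ

/-- Increasing enumeration of a k-element subset of Fin m. -/
def finsetEmb {m k : ℕ} (J : Idx m k) : Fin k → Fin m := fun a => (J.1.orderIsoOfFin J.2 a : Fin m)

/-- Action of an m×m matrix on the k-th exterior power, in the standard wedge basis
(given by the k×k minors). -/
def extPow {m k : ℕ} (g : Matrix (Fin m) (Fin m) ℝ) (v : Lam m k) : Lam m k :=
  fun J => ∑ K : Idx m k, (g.submatrix (finsetEmb J) (finsetEmb K)).det * v K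

/-- The wedge product v₁ ∧ ⋯ ∧ v_k of k vectors in ℝ^m, in coordinates. -/
def wedge {m k : ℕ} (vs : Fin k → (Fin m → ℝ)) : Lam m k :=
  fun J => (Matrix.of fun a b : Fin k => vs b (finsetEmb J a)).det

/-- The wedge product of k integer vectors. -/
def wedgeInt {m k : ℕ} (vs : Fin k → (Fin m → ℤ)) : Lam m k :=
  wedge (fun j i => (vs j i : ℝ))

/-- The projection π_i of Λ^k ℝ^m onto the span of the wedges e_J having exactly i factors
among e_0,…,e_d (zero if i is out of range). -/
def proj (d : ℕ) {m k : ℕ} (i : ℕ) (v : Lam m k) : Lam m k :=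
  fun J => if (J.1.filter (fun x : Fin m => (x : ℕ) ≤ d)).card = i then v J else 0

/-- The projection π₊ of Λ^k ℝ^{d+1} onto the span of the wedges e_J with 0 ∈ J. -/
def projPlus {d k : ℕ} (v : Lam (d+1) k) : Lam (d+1) k :=
  fun J => if (0 : Fin (d+1)) ∈ J.1 then v J else 0

/-- The projection π₋ of Λ^k ℝ^{d+1} onto the span of the wedges e_J with 0 ∉ J. -/
def projMinus {d k : ℕ} (v : Lam (d+1) k) : Lam (d+1) k :=
  fun J => if (0 : Fin (d+1)) ∉ J.1 then v J else 0

/-! ## The homogeneous space X = SL_{n+1}(ℝ)/SL_{n+1}(ℤ) -/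

noncomputable instance SLtop (m : ℕ) : TopologicalSpace (Matrix.SpecialLinearGroup (Fin m) ℝ) :=
  TopologicalSpace.induced (fun g => (g : Matrix (Fin m) (Fin m) ℝ)) inferInstance

abbrev SLn (m : ℕ) := Matrix.SpecialLinearGroup (Fin m) ℝ

/-- Γ = SL_m(ℤ) viewed as a subgroup of SL_m(ℝ). -/
def Gamma (m : ℕ) : Subgroup (SLn m) :=
  (Matrix.SpecialLinearGroup.map (n := Fin m) (Int.castRingHom ℝ)).range

/-- The space X = SL_m(ℝ)/SL_m(ℤ). -/
abbrev Xsp (m : ℕ) := SLn m ⧸ Gamma m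

/-! ## Matrices and one-parameter subgroups -/

lemma det_upperTri {m : ℕ} (M : Matrix (Fin m) (Fin m) ℝ)
    (hoff : ∀ i j : Fin m, (j : ℕ) < (i : ℕ) → M i j = 0)
    (hdiag : ∀ i, M i i = 1) : M.det = 1 := by
  have hbt : M.BlockTriangular id := fun i j hij => hoff i j hij
  rw [Matrix.det_of_upperTriangular hbt]
  simp [hdiag]

/-- u(s): the identity matrix with s₁,…,s_d placed in the first row (columns 1,…,d). -/
def uMat (n d : ℕ) (s : Fin d → ℝ) : Matrix (Fin (n+1)) (Fin (n+1)) ℝ :=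
  Matrix.of fun i j =>
    if i = j then 1
    else if h : i = 0 ∧ 1 ≤ (j : ℕ) ∧ (j : ℕ) ≤ d then s ⟨(j : ℕ) - 1, by omega⟩ else 0

/-- u(s) as an element of SL_{n+1}(ℝ). -/
def uSL (n d : ℕ) (s : Fin d → ℝ) : SLn (n+1) :=
  ⟨uMat n d s, det_upperTri _ (fun i j hij => by
      simp only [uMat, Matrix.of_apply]
      rw [if_neg (by rintro rfl; omega), dif_neg (by rintro ⟨rfl, h1, h2⟩; simp at hij)])
    (fun i => by simp [uMat])⟩

/-- u(x): the identity matrix with x ∈ ℝ^n placed in the first row. -/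
def uxMat (n : ℕ) (x : Fin n → ℝ) : Matrix (Fin (n+1)) (Fin (n+1)) ℝ :=
  Matrix.of fun i j =>
    if i = j then 1
    else if h : i = 0 ∧ 1 ≤ (j : ℕ) then x ⟨(j : ℕ) - 1, by have := j.isLt; omega⟩ else 0

/-- u(x) as an element of SL_{n+1}(ℝ). -/
def uxSL (n : ℕ) (x : Fin n → ℝ) : SLn (n+1) :=
  ⟨uxMat n x, det_upperTri _ (fun i j hij => by
      simp only [uxMat, Matrix.of_apply]
      rw [if_neg (by rintro rfl; omega), dif_neg (by rintro ⟨rfl, h1⟩; simp at hij)])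
    (fun i => by simp [uxMat])⟩

/-- u_A: the block unipotent matrix with I_{d+1}, I_{n−d} on the diagonal and A in the
upper-right block. -/
def uAMat (n d : ℕ) (A : Matrix (Fin (d+1)) (Fin (n-d)) ℝ) : Matrix (Fin (n+1)) (Fin (n+1)) ℝ :=
  Matrix.of fun i j =>
    if i = j then 1
    else if h : (i : ℕ) ≤ d ∧ d + 1 ≤ (j : ℕ) then
      A ⟨(i : ℕ), by omega⟩ ⟨(j : ℕ) - (d+1), by have := j.isLt; omega⟩ else 0

/-- u_A as an element of SL_{n+1}(ℝ). -/
def uASL (n d : ℕ) (A : Matrix (Fin (d+1)) (Fin (n-d)) ℝ) : SLn (n+1) :=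
  ⟨uAMat n d A, det_upperTri _ (fun i j hij => by
      simp only [uAMat, Matrix.of_apply]
      rw [if_neg (by rintro rfl; omega), dif_neg (by rintro ⟨h1, h2⟩; omega)])
    (fun i => by simp [uAMat])⟩

lemma sum_ite_fin (m k : ℕ) (hk : k ≤ m) (a b : ℝ) :
    (∑ i : Fin m, if (i : ℕ) < k then a else b) = k * a + ((m - k : ℕ) : ℝ) * b := by
  rw [Fin.sum_univ_eq_sum_range (fun i => if i < k then a else b) m]
  rw [Finset.range_eq_Ico, ← Finset.sum_Ico_consecutive _ (Nat.zero_le k) hk]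
  rw [Finset.sum_congr rfl (fun i hi => if_pos (Finset.mem_Ico.mp hi).2),
    Finset.sum_congr rfl (g := fun _ => b)
      (fun i hi => if_neg (Nat.not_lt.mpr (Finset.mem_Ico.mp hi).1))]
  simp [Nat.card_Ico, mul_comm]

/-- A diagonal matrix with entries exp (f i), as an element of SL_m(ℝ). -/
def diagSL (m : ℕ) (f : Fin m → ℝ) (h : ∑ i, f i = 0) : SLn m :=
  ⟨Matrix.diagonal fun i => Real.exp (f i), by
    rw [Matrix.det_diagonal, ← Real.exp_sum, h, Real.exp_zero]⟩

/-- b_t = diag(e^{(n−d)t/((d+1)(n+1))}·I_{d+1}, e^{−t/(n+1)}·I_{n−d}) ∈ SL_{n+1}(ℝ). -/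
def btSL (n d : ℕ) (h : d ≤ n) (t : ℝ) : SLn (n+1) :=
  diagSL (n+1)
    (fun i => if (i : ℕ) < d + 1 then ((n : ℝ) - (d : ℝ)) * t / (((d : ℝ) + 1) * ((n : ℝ) + 1))
      else -t / ((n : ℝ) + 1))
    (by
      rw [sum_ite_fin (n+1) (d+1) (by omega)]
      have h1 : ((n + 1 - (d + 1) : ℕ) : ℝ) = (n : ℝ) - (d : ℝ) := by
        have h2 : (n + 1 - (d + 1) : ℕ) = n - d := by omega
        rw [h2, Nat.cast_sub h]
      rw [h1]
      have hd1 : ((d : ℝ) + 1) ≠ 0 := by positivity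
      have hn1 : ((n : ℝ) + 1) ≠ 0 := by positivity
      field_simp
      push_cast
      ring)

/-- c_t = diag(e^{dt/(d+1)}, e^{−t/(d+1)}·I_d, I_{n−d}) ∈ SL_{n+1}(ℝ). -/
def ctSL (n d : ℕ) (h : d ≤ n) (t : ℝ) : SLn (n+1) :=
  diagSL (n+1)
    (fun i => if (i : ℕ) = 0 then (d : ℝ) * t / ((d : ℝ) + 1)
      else if (i : ℕ) < d + 1 then -t / ((d : ℝ) + 1) else 0)
    (by
      rw [Fin.sum_univ_succ]
      simp only [Fin.val_zero, if_pos rfl, Fin.val_succ]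
      have key : ∀ i : Fin n,
          (if (i : ℕ) + 1 = 0 then (d : ℝ) * t / ((d : ℝ) + 1)
            else if (i : ℕ) + 1 < d + 1 then -t / ((d : ℝ) + 1) else 0)
          = (if (i : ℕ) < d then -t / ((d : ℝ) + 1) else 0) := by
        intro i
        rw [if_neg (by omega)]
        by_cases hc : (i : ℕ) < d
        · rw [if_pos (by omega), if_pos hc]
        · rw [if_neg (by omega), if_neg hc]
      rw [Finset.sum_congr rfl fun i _ => key i, sum_ite_fin n d h]
      have hd1 : ((d : ℝ) + 1) ≠ 0 := by positivity
      field_simp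
      simp only [if_true, mul_zero, add_zero]
      field_simp
      try ring)

/-- g_t = diag(e^{nt/(n+1)}, e^{−t/(n+1)}·I_n) ∈ SL_{n+1}(ℝ). -/
def gtSL (n : ℕ) (t : ℝ) : SLn (n+1) :=
  diagSL (n+1)
    (fun i => if (i : ℕ) = 0 then (n : ℝ) * t / ((n : ℝ) + 1) else -t / ((n : ℝ) + 1))
    (by
      rw [Fin.sum_univ_succ]
      simp only [Fin.val_zero, if_pos rfl, Fin.val_succ]
      have key : ∀ i : Fin n,
          (if (i : ℕ) + 1 = 0 then (n : ℝ) * t / ((n : ℝ) + 1) else -t / ((n : ℝ) + 1))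
          = -t / ((n : ℝ) + 1) := fun i => if_neg (by omega)
      rw [Finset.sum_congr rfl fun i _ => key i, Finset.sum_const, Finset.card_univ,
        Fintype.card_fin, nsmul_eq_mul]
      have hn1 : ((n : ℝ) + 1) ≠ 0 := by positivity
      field_simp
      simp only [if_true, mul_zero, add_zero]
      field_simp
      try ring)

/-- c_t = diag(e^{dt/(d+1)}, e^{−t/(d+1)}·I_d) as a (d+1)×(d+1) matrix. -/
def ctMat1 (d : ℕ) (t : ℝ) : Matrix (Fin (d+1)) (Fin (d+1)) ℝ :=
  Matrix.diagonal fun i =>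
    if (i : ℕ) = 0 then Real.exp ((d : ℝ) * t / ((d : ℝ) + 1))
    else Real.exp (-t / ((d : ℝ) + 1))

/-- c_t = diag(e^{dt/(d+1)}, e^{−t/(d+1)}·I_d, I_{n−d}) as an (n+1)×(n+1) matrix. -/
def ctMatN (n d : ℕ) (t : ℝ) : Matrix (Fin (n+1)) (Fin (n+1)) ℝ :=
  Matrix.diagonal fun i =>
    if (i : ℕ) = 0 then Real.exp ((d : ℝ) * t / ((d : ℝ) + 1))
    else if (i : ℕ) < d + 1 then Real.exp (-t / ((d : ℝ) + 1)) else 1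

/-- The identification Fin (n+1) ≃ Fin (d+1) ⊕ Fin (n−d). -/
def finSplit (n d : ℕ) (h : d ≤ n) : Fin (n+1) ≃ Fin (d+1) ⊕ Fin (n-d) :=
  (finCongr (by omega)).trans finSumFinEquiv.symm

/-- The embedding SL_{d+1}(ℝ) → SL_{n+1}(ℝ), h ↦ diag(h, I_{n−d}); its image is the
subgroup H of the paper. -/
def embedSL (n d : ℕ) (h : d ≤ n) (g : Matrix.SpecialLinearGroup (Fin (d+1)) ℝ) : SLn (n+1) :=
  ⟨Matrix.reindex (finSplit n d h).symm (finSplit n d h).symm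
      (Matrix.fromBlocks (g : Matrix (Fin (d+1)) (Fin (d+1)) ℝ) 0 0
        (1 : Matrix (Fin (n-d)) (Fin (n-d)) ℝ)), by
    rw [Matrix.det_reindex_self, Matrix.det_fromBlocks_zero₂₁, Matrix.det_one, mul_one]
    exact g.2⟩

/-! ## Height functions and exponents -/

/-- The cube I^d = [−1/2, 1/2]^d. -/
def Icube (d : ℕ) : Set (Fin d → ℝ) := Set.univ.pi fun _ => Set.Icc (-(1/2) : ℝ) (1/2)

/-- The function φ_ε on Λ^k ℝ^{n+1}, with values in [0,∞] (here δ_k = (n+1−k)k). -/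
def phiFn (n d k : ℕ) (ε : ℝ) (v : Lam (n+1) k) : ℝ≥0∞ :=
  if ‖proj d 0 v + proj d (d+1) v‖ < ε ^ ((n + 1 - k) * k) then
    ⨅ i ∈ Finset.Icc 1 d,
      ENNReal.ofReal
          (ε ^ ((((d : ℝ) + 1) / (((d : ℝ) + 1) - (i : ℝ))) * (((n + 1 - k) * k : ℕ) : ℝ)))
        * ENNReal.ofReal ‖proj d i v‖ ^ (-(((d : ℝ) + 1) / (((d : ℝ) + 1) - (i : ℝ))))
  else 0

/-- v ∈ Λ^k ℝ^{n+1} is a y-integral vector: v = g(v₁ ∧ ⋯ ∧ v_k) for a representative g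
of y and linearly independent integer vectors v₁,…,v_k. -/
def IsIntegralVec (n : ℕ) {k : ℕ} (y : Xsp (n+1)) (v : Lam (n+1) k) : Prop :=
  ∃ g : SLn (n+1), (QuotientGroup.mk g : Xsp (n+1)) = y ∧
    ∃ w : Fin k → (Fin (n+1) → ℤ), LinearIndependent ℤ w ∧
      v = extPow (g : Matrix (Fin (n+1)) (Fin (n+1)) ℝ) (wedgeInt w)

/-- The Margulis height function α_ε^θ on X. -/
def alphaF (n d : ℕ) (ε θ : ℝ) (y : Xsp (n+1)) : ℝ≥0∞ :=
  ⨆ k ∈ Finset.Icc 1 n, ⨆ v : Lam (n+1) k, ⨆ _ : v ≠ 0 ∧ IsIntegralVec n y v, phiFn n d k ε v ^ θ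

/-- The dynamical exponent ρ(y; b_t, α) = limsup_{t→∞} log α(b_t y) / t ∈ [−∞,∞]. -/
def rhoExp (n d : ℕ) (h : d ≤ n) (α : Xsp (n+1) → ℝ≥0∞) (y : Xsp (n+1)) : EReal :=
  Filter.limsup (fun t : ℝ => ENNReal.log (α (btSL n d h t • y)) / (t : EReal)) Filter.atTop

/-- α̃_δ(y) = ∫₀^∞ e^{−δt} α(b_t y) dt. -/
def atilde (n d : ℕ) (h : d ≤ n) (δ : ℝ) (α : Xsp (n+1) → ℝ≥0∞) (y : Xsp (n+1)) : ℝ≥0∞ :=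
  ∫⁻ t in Set.Ioi (0 : ℝ), ENNReal.ofReal (Real.exp (-δ * t)) * α (btSL n d h t • y)

/-- α is Lipschitz with respect to the action of H = diag(SL_{d+1}(ℝ), I_{n−d}). -/
def LipschitzWrtH (n d : ℕ) (h : d ≤ n) (α : Xsp (n+1) → ℝ≥0∞) : Prop :=
  ∀ F : Set (SLn (n+1)), F ⊆ Set.range (embedSL n d h) → IsCompact F →
    ∃ C : ℝ, 1 ≤ C ∧ ∀ g ∈ F, ∀ y : Xsp (n+1), α (g • y) ≤ ENNReal.ofReal C * α y

/-- y ∈ X is g_t-divergent on average. -/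
def gDivergentOnAvg (n : ℕ) (y : Xsp (n+1)) : Prop :=
  ∀ K : Set (Xsp (n+1)), IsCompact K →
    Tendsto (fun N : ℕ => ((Set.ncard {l : ℕ | 1 ≤ l ∧ l ≤ N ∧ gtSL n l • y ∈ K} : ℝ) / N))
      atTop (nhds 0)

/-- The set B_x(M,t,m;N) of the paper (for x = y_A and the height function α̃ = α̃_δ). -/
def Bset (n d : ℕ) (h : d ≤ n) (δ : ℝ) (α : Xsp (n+1) → ℝ≥0∞) (yA : Xsp (n+1))
    (M t : ℝ) (m N : ℕ) : Set (Fin d → ℝ) :=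
  {s : Fin d → ℝ | s ∈ Icube d ∧
    atilde n d h δ α ((gtSL n ((m : ℝ) * t) * uSL n d s) • yA) < ENNReal.ofReal M ∧
    ∀ l : ℕ, 1 ≤ l → l ≤ N →
      ENNReal.ofReal M ≤ atilde n d h δ α ((gtSL n (((m : ℝ) + (l : ℝ)) * t) * uSL n d s) • yA)}

/-! ## Diophantine approximation -/

/-- x ∈ ℝ^n is a singular vector. -/
def IsSingular (n : ℕ) (x : Fin n → ℝ) : Prop :=
  ∀ ε : ℝ, 0 < ε → ∃ N₀ : ℝ, ∀ N : ℝ, N₀ ≤ N → ∃ q : Fin n → ℤ, q ≠ 0 ∧ ∃ p : ℤ,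
    |(∑ i, (q i : ℝ) * x i) - (p : ℝ)| ≤ ε * N ^ (-(n : ℝ)) ∧ ‖q‖ ≤ N

/-- The vector (s, s̃A) ∈ ℝ^n, where s̃ = (1, s₁, …, s_d). -/
def xvec (n d : ℕ) (h : d ≤ n) (A : Matrix (Fin (d+1)) (Fin (n-d)) ℝ) (s : Fin d → ℝ) :
    Fin n → ℝ :=
  fun i => Fin.append s (Matrix.vecMul (Fin.cons 1 s) A) (Fin.cast (Nat.add_sub_cancel' h).symm i)

/-- The set of exponents ω for which ‖Aq − p‖ ≤ ‖q‖^{−ω} has infinitely many solutions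
q ∈ ℤ^{n−d} \ {0}, p ∈ ℤ^{d+1}. -/
def diophSet (n d : ℕ) (A : Matrix (Fin (d+1)) (Fin (n-d)) ℝ) : Set ℝ :=
  {ω : ℝ | {qp : (Fin (n-d) → ℤ) × (Fin (d+1) → ℤ) | qp.1 ≠ 0 ∧
    ‖A.mulVec (fun i => (qp.1 i : ℝ)) - (fun i => (qp.2 i : ℝ))‖ ≤ ‖qp.1‖ ^ (-ω)}.Infinite}

/-- The Diophantine exponent ω(A) ∈ [−∞, +∞]. -/
def omegaExp (n d : ℕ) (A : Matrix (Fin (d+1)) (Fin (n-d)) ℝ) : EReal :=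
  sSup (Real.toEReal '' diophSet n d A)

end

namespace DplusAux

open Finset MeasureTheory

/-- index shift: m ↦ m − 1 -/
def idxPred {d : ℕ} (m : Fin (d+1)) (hm : m ≠ 0) : Fin d :=
  ⟨(m : ℕ) - 1, by
    have h1 := m.isLt
    have h2 : (m : ℕ) ≠ 0 := fun h => hm (Fin.ext h)
    omega⟩

lemma finsetEmb_mem {m k : ℕ} (J : Idx m k) (a : Fin k) : finsetEmb J a ∈ J.1 :=
  (J.1.orderIsoOfFin J.2 a).2

lemma finsetEmb_strictMono {m k : ℕ} (J : Idx m k) : StrictMono (finsetEmb J) := by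
  intro a b hab
  exact Subtype.coe_lt_coe.mpr ((J.1.orderIsoOfFin J.2).strictMono hab)

lemma finsetEmb_injective {m k : ℕ} (J : Idx m k) : Function.Injective (finsetEmb J) :=
  (finsetEmb_strictMono J).injective

lemma finsetEmb_exists {m k : ℕ} (J : Idx m k) {x : Fin m} (hx : x ∈ J.1) :
    ∃ a : Fin k, finsetEmb J a = x :=
  ⟨(J.1.orderIsoOfFin J.2).symm ⟨x, hx⟩, by
    simp [finsetEmb]⟩

lemma uxMat_apply_diag {d : ℕ} (s : Fin d → ℝ) (x : Fin (d+1)) : uxMat d s x x = 1 := by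
  simp [uxMat]

lemma uxMat_apply_ne {d : ℕ} (s : Fin d → ℝ) {x y : Fin (d+1)} (h : x ≠ y) (hx : x ≠ 0) :
    uxMat d s x y = 0 := by
  simp only [uxMat, Matrix.of_apply]
  rw [if_neg h, dif_neg]
  rintro ⟨h1, -⟩
  exact hx h1

lemma uxMat_apply_zero {d : ℕ} (s : Fin d → ℝ) {y : Fin (d+1)} (hy : y ≠ 0) :
    uxMat d s 0 y = s (idxPred y hy) := by
  have hy' : 1 ≤ (y : ℕ) := by
    have : (y : ℕ) ≠ 0 := fun h => hy (Fin.ext h)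
    omega
  simp only [uxMat, Matrix.of_apply]
  rw [if_neg (fun h => hy h.symm), dif_pos ⟨by simp, hy'⟩]
  rfl

lemma uxMat_abs_le {d : ℕ} {s : Fin d → ℝ} (hs : ∀ l, |s l| ≤ 1/2) (x y : Fin (d+1)) :
    |uxMat d s x y| ≤ 1 := by
  simp only [uxMat, Matrix.of_apply]
  split_ifs
  · simp
  · exact le_trans (hs _) (by norm_num)
  · simp

lemma det_submatrix_self {d i : ℕ} (s : Fin d → ℝ) (J : Idx (d+1) i) :
    ((uxMat d s).submatrix (finsetEmb J) (finsetEmb J)).det = 1 := by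
  apply det_upperTri
  · intro a b hab
    have hlt : finsetEmb J b < finsetEmb J a := finsetEmb_strictMono J hab
    exact uxMat_apply_ne s hlt.ne' (Fin.pos_iff_ne_zero.mp (lt_of_le_of_lt (Fin.zero_le _) hlt))
  · intro a
    exact uxMat_apply_diag s _

lemma det_submatrix_zero {d i : ℕ} (s : Fin d → ℝ) (J K : Idx (d+1) i) {x : Fin (d+1)}
    (hxJ : x ∈ J.1) (hxK : x ∉ K.1) (hx : x ≠ 0) :
    ((uxMat d s).submatrix (finsetEmb J) (finsetEmb K)).det = 0 := by
  obtain ⟨a, ha⟩ := finsetEmb_exists J hxJ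
  apply Matrix.det_eq_zero_of_row_eq_zero a
  intro b
  simp only [Matrix.submatrix_apply]
  rw [ha]
  exact uxMat_apply_ne s (fun h => hxK (h ▸ finsetEmb_mem K b)) hx

lemma abs_det_submatrix_le {d i : ℕ} {s : Fin d → ℝ} (hs : ∀ l, |s l| ≤ 1/2)
    (J K : Idx (d+1) i) (h0J : (0 : Fin (d+1)) ∈ J.1) (h0K : (0 : Fin (d+1)) ∉ K.1) :
    |((uxMat d s).submatrix (finsetEmb J) (finsetEmb K)).det| ≤ (i.factorial : ℝ) / 2 := by
  obtain ⟨aJ, haJ⟩ := finsetEmb_exists J h0J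
  rw [Matrix.det_apply]
  calc |∑ σ : Equiv.Perm (Fin i), Equiv.Perm.sign σ •
          ∏ a, (uxMat d s).submatrix (finsetEmb J) (finsetEmb K) (σ a) a|
      ≤ ∑ σ : Equiv.Perm (Fin i), |Equiv.Perm.sign σ •
          ∏ a, (uxMat d s).submatrix (finsetEmb J) (finsetEmb K) (σ a) a| :=
        Finset.abs_sum_le_sum_abs _ _
    _ ≤ ∑ _σ : Equiv.Perm (Fin i), (1/2 : ℝ) := by
        refine Finset.sum_le_sum fun σ _ => ?_
        have habs : |Equiv.Perm.sign σ •
            ∏ a, (uxMat d s).submatrix (finsetEmb J) (finsetEmb K) (σ a) a|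
            = |∏ a, (uxMat d s).submatrix (finsetEmb J) (finsetEmb K) (σ a) a| := by
          rcases Int.units_eq_one_or (Equiv.Perm.sign σ) with h | h <;>
            simp [h, Units.smul_def, abs_neg]
        rw [habs, abs_prod]
        calc ∏ a, |(uxMat d s).submatrix (finsetEmb J) (finsetEmb K) (σ a) a|
            ≤ ∏ a, (if a = σ⁻¹ aJ then (1/2 : ℝ) else 1) := by
              refine Finset.prod_le_prod (fun a _ => abs_nonneg _) (fun a _ => ?_)
              by_cases ha : a = σ⁻¹ aJ
              · subst ha
                rw [if_pos rfl]
                simp only [Matrix.submatrix_apply, (Equiv.Perm.eq_inv_iff_eq.mp rfl : σ (σ⁻¹ aJ) = aJ), haJ]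
                have hKa : finsetEmb K (σ⁻¹ aJ) ≠ 0 :=
                  fun h => h0K (h ▸ finsetEmb_mem K (σ⁻¹ aJ))
                rw [uxMat_apply_zero s hKa]
                exact hs _
              · rw [if_neg ha]
                exact uxMat_abs_le hs _ _
          _ = 1/2 := by
              rw [Finset.prod_ite_eq' Finset.univ (σ⁻¹ aJ) (fun _ => (1/2 : ℝ))]
              simp
    _ = (i.factorial : ℝ) / 2 := by
        rw [Finset.sum_const, Finset.card_univ, Fintype.card_perm, Fintype.card_fin,
          nsmul_eq_mul]
        ring

lemma det_submatrix_formula {d i : ℕ} (J K : Idx (d+1) i)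
    (h0J : (0 : Fin (d+1)) ∈ J.1) (h0K : (0 : Fin (d+1)) ∉ K.1)
    (hJK : J.1.erase 0 ⊆ K.1) {m : Fin (d+1)} (hmK : m ∈ K.1) (hmJ : m ∉ J.1) :
    ∃ ε : ℝ, (ε = 1 ∨ ε = -1) ∧ ∀ s : Fin d → ℝ,
      ((uxMat d s).submatrix (finsetEmb J) (finsetEmb K)).det
        = ε * s (idxPred m (fun h => h0K (h ▸ hmK))) := by
  classical
  obtain ⟨aJ, haJ⟩ := finsetEmb_exists J h0J
  obtain ⟨aK, haK⟩ := finsetEmb_exists K hmK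
  have hm0 : m ≠ 0 := fun h => h0K (h ▸ hmK)
  -- K = insert m (J.erase 0)
  have hKeq : K.1 = insert m (J.1.erase 0) := by
    refine (Finset.eq_of_subset_of_card_le (Finset.insert_subset hmK hJK) ?_).symm
    rw [Finset.card_insert_of_notMem (fun h => hmJ (Finset.mem_of_mem_erase h)),
      Finset.card_erase_of_mem h0J, J.2, K.2]
    have hipos : 0 < i := by
      rcases Nat.eq_zero_or_pos i with h | h
      · exfalso; rw [← J.2, Finset.card_eq_zero] at h; simp [h] at h0J
      · exact h
    omega
  -- membership of other columns in J
  have hmem : ∀ a : Fin i, a ≠ aK → finsetEmb K a ∈ J.1 := by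
    intro a ha
    have h1 : finsetEmb K a ∈ K.1 := finsetEmb_mem K a
    rw [hKeq, Finset.mem_insert] at h1
    rcases h1 with h1 | h1
    · exact absurd (finsetEmb_injective K (h1.trans haK.symm)) ha
    · exact Finset.mem_of_mem_erase h1
  -- the permutation
  let ι : ∀ x ∈ J.1, Fin i := fun x hx => (J.1.orderIsoOfFin J.2).symm ⟨x, hx⟩
  have hι : ∀ x (hx : x ∈ J.1), finsetEmb J (ι x hx) = x := by
    intro x hx
    simp [ι, finsetEmb]
  let g : Fin i → Fin i := fun a =>
    if h : a = aK then aJ else ι (finsetEmb K a) (hmem a h)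
  have hgK : g aK = aJ := dif_pos rfl
  have hgemb : ∀ a : Fin i, a ≠ aK → finsetEmb J (g a) = finsetEmb K a := by
    intro a ha
    simp only [g, dif_neg ha]
    exact hι _ _
  have hginj : Function.Injective g := by
    intro a b hab
    by_cases ha : a = aK <;> by_cases hb : b = aK
    · rw [ha, hb]
    · exfalso
      have h1 : finsetEmb J (g b) = finsetEmb K b := hgemb b hb
      rw [← hab, ha, hgK, haJ] at h1
      exact h0K (h1.symm ▸ finsetEmb_mem K b)
    · exfalso
      have h1 : finsetEmb J (g a) = finsetEmb K a := hgemb a ha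
      rw [hab, hb, hgK, haJ] at h1
      exact h0K (h1.symm ▸ finsetEmb_mem K a)
    · have h1 := (hgemb a ha).symm.trans (congrArg (finsetEmb J) hab)
      rw [hgemb b hb] at h1
      exact finsetEmb_injective K h1
  let σ₀ : Equiv.Perm (Fin i) := Equiv.ofBijective g (Finite.injective_iff_bijective.mp hginj)
  have hσ₀ : ∀ a, σ₀ a = g a := fun a => rfl
  -- other permutations contribute zero
  have hzero : ∀ s : Fin d → ℝ, ∀ σ : Equiv.Perm (Fin i), σ ≠ σ₀ →
      (Equiv.Perm.sign σ •
        ∏ a, (uxMat d s).submatrix (finsetEmb J) (finsetEmb K) (σ a) a) = 0 := by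
    intro s σ hσ
    have hprod : (∏ a, (uxMat d s).submatrix (finsetEmb J) (finsetEmb K) (σ a) a) = 0 := by
      by_contra hne
      have hall : ∀ a, (uxMat d s).submatrix (finsetEmb J) (finsetEmb K) (σ a) a ≠ 0 :=
        fun a ha => hne (Finset.prod_eq_zero (Finset.mem_univ a) ha)
      have hopt : ∀ a, finsetEmb J (σ a) = finsetEmb K a ∨ finsetEmb J (σ a) = 0 := by
        intro a
        by_contra hc
        push_neg at hc
        exact hall a (by
          simp only [Matrix.submatrix_apply]
          exact uxMat_apply_ne s hc.1 hc.2)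
      have hsaK : σ aK = aJ := by
        rcases hopt aK with h | h
        · rw [haK] at h
          exact absurd (h ▸ finsetEmb_mem J (σ aK)) hmJ
        · exact finsetEmb_injective J (h.trans haJ.symm)
      have : σ = σ₀ := by
        refine Equiv.ext fun a => ?_
        rw [hσ₀]
        by_cases ha : a = aK
        · rw [ha, hsaK, hgK]
        · rcases hopt a with h | h
          · exact finsetEmb_injective J (h.trans (hgemb a ha).symm)
          · exfalso
            have h1 : σ a = aJ := finsetEmb_injective J (h.trans haJ.symm)
            exact ha (σ.injective (h1.trans hsaK.symm))
      exact hσ this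
    rw [hprod, smul_zero]
  -- main term
  have hmain : ∀ s : Fin d → ℝ,
      (∏ a, (uxMat d s).submatrix (finsetEmb J) (finsetEmb K) (σ₀ a) a)
        = s (idxPred m hm0) := by
    intro s
    rw [Finset.prod_eq_single aK (fun a _ ha => by
      simp only [Matrix.submatrix_apply, hσ₀, hgemb a ha]
      exact uxMat_apply_diag s _) (fun h => absurd (Finset.mem_univ aK) h)]
    simp only [Matrix.submatrix_apply, hσ₀, hgK, haJ, haK]
    exact uxMat_apply_zero s hm0
  refine ⟨((Equiv.Perm.sign σ₀ : ℤ) : ℝ), ?_, fun s => ?_⟩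
  · rcases Int.units_eq_one_or (Equiv.Perm.sign σ₀) with h | h <;> simp [h]
  · rw [Matrix.det_apply, Finset.sum_eq_single_of_mem σ₀ (Finset.mem_univ σ₀)
      (fun σ _ hσ => hzero s σ hσ), hmain s]
    rcases Int.units_eq_one_or (Equiv.Perm.sign σ₀) with h | h <;>
      simp [h, Units.smul_def]

lemma continuous_w {d i : ℕ} (v : Lam (d+1) i) (J : Idx (d+1) i) :
    Continuous fun s : Fin d → ℝ => extPow (uxMat d s) v J := by
  unfold extPow
  refine continuous_finset_sum _ fun K _ => Continuous.mul ?_ continuous_const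
  refine Continuous.matrix_det (continuous_matrix fun a b => ?_)
  simp only [Matrix.submatrix_apply, uxMat, Matrix.of_apply]
  split_ifs
  · exact continuous_const
  · exact continuous_apply _
  · exact continuous_const

lemma exists_norm_eq {ι : Type*} [Fintype ι] [Nonempty ι] (v : ι → ℝ) :
    ∃ j, ‖v‖ = |v j| := by
  obtain ⟨j, -, hj⟩ := Finset.exists_mem_eq_sup Finset.univ Finset.univ_nonempty
    (fun i => ‖v i‖₊)
  refine ⟨j, ?_⟩
  rw [Pi.norm_def, hj]
  simp [Real.norm_eq_abs]

lemma abs_affine_mem {a c r x : ℝ} (ha : a ≠ 0) (h : |a * x + c| ≤ r) :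
    x ∈ Set.Icc (min ((-r - c)/a) ((r - c)/a)) (max ((-r - c)/a) ((r - c)/a)) := by
  rw [abs_le] at h
  rcases lt_or_gt_of_ne ha with hneg | hpos
  · constructor
    · refine le_trans (min_le_right _ _) ?_
      rw [div_le_iff_of_neg hneg]; linarith
    · refine le_trans ?_ (le_max_left _ _)
      rw [le_div_iff_of_neg hneg]; linarith
  · constructor
    · refine le_trans (min_le_left _ _) ?_
      rw [div_le_iff₀ hpos]; linarith
    · refine le_trans ?_ (le_max_right _ _)
      rw [le_div_iff₀ hpos]; linarith

lemma interval_len {β r : ℝ} (hβ : 0 < β) (hr : 0 < r) {a : ℝ} (haβ : β ≤ |a|) (c : ℝ) :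
    max ((-r - c)/a) ((r - c)/a) - min ((-r - c)/a) ((r - c)/a) ≤ 2 * r / β := by
  have ha0 : a ≠ 0 := by
    intro h
    rw [h, abs_zero] at haβ
    linarith
  rw [max_sub_min_eq_abs]
  have heq : (r - c)/a - (-r - c)/a = 2*r/a := by
    field_simp
    ring
  rw [heq, abs_div, abs_of_nonneg (by linarith : (0:ℝ) ≤ 2*r)]
  exact div_le_div_of_nonneg_left (by linarith) hβ haβ

lemma measure_bound {d : ℕ} (T : Finset (Fin d)) (β r : ℝ) (hβ : 0 < β) (hr : 0 < r)
    (f : Fin d → (Fin d → ℝ) → ℝ) (hfc : ∀ l ∈ T, Continuous (f l))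
    (hf : ∀ l ∈ T, ∃ a : ℝ, β ≤ |a| ∧ ∀ s : Fin d → ℝ,
      f l s = a * s l + f l (fun m => if m ∈ T then 0 else s m)) :
    volume {s : Fin d → ℝ | s ∈ Icube d ∧ ∀ l ∈ T, |f l s| ≤ r}
      ≤ ENNReal.ofReal (2 * r / β) ^ T.card := by
  choose a haβ haf using hf
  set Z := {s : Fin d → ℝ | s ∈ Icube d ∧ ∀ l ∈ T, |f l s| ≤ r} with hZ
  have hZm : MeasurableSet Z := by
    have hZeq : Z = Icube d ∩ ⋂ l ∈ T, {s : Fin d → ℝ | |f l s| ≤ r} := by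
      ext s
      simp [hZ, Set.mem_iInter]
    rw [hZeq]
    refine (MeasurableSet.univ_pi fun _ => measurableSet_Icc).inter ?_
    refine MeasurableSet.biInter (T : Set (Fin d)).to_countable fun l hl => ?_
    exact measurableSet_le ((hfc l hl).abs.measurable) measurable_const
  set e := MeasurableEquiv.piEquivPiSubtypeProd (fun _ : Fin d => ℝ) (· ∈ T) with he
  have hmp : MeasurePreserving e volume
      ((volume : Measure ({l : Fin d // l ∈ T} → ℝ)).prod
        (volume : Measure ({l : Fin d // ¬ l ∈ T} → ℝ))) := by
    simp only [volume_pi]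
    convert measurePreserving_piEquivPiSubtypeProd (fun _ : Fin d => (volume : Measure ℝ))
      (· ∈ T) using 2 <;> congr!
  have hE : MeasurableSet (e.symm ⁻¹' Z) := e.symm.measurable hZm
  have key : volume Z
      = ((volume : Measure ({l : Fin d // l ∈ T} → ℝ)).prod
          (volume : Measure ({l : Fin d // ¬ l ∈ T} → ℝ)))
        (e.symm ⁻¹' Z) := ((hmp.symm e).measure_preimage hZm.nullMeasurableSet).symm
  rw [key, MeasureTheory.Measure.prod_apply_symm hE]
  set c : ℝ≥0∞ := ENNReal.ofReal (2 * r / β) ^ T.card with hc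
  set B : Set ({l : Fin d // ¬ l ∈ T} → ℝ) :=
    Set.pi Set.univ (fun _ => Set.Icc (-(1/2) : ℝ) (1/2)) with hB
  have hBm : MeasurableSet B := MeasurableSet.univ_pi fun _ => measurableSet_Icc
  have hesymm : ∀ (x : {l : Fin d // l ∈ T} → ℝ) (y : {l : Fin d // ¬ l ∈ T} → ℝ)
      (mm : Fin d),
      e.symm (x, y) mm = if h : mm ∈ T then x ⟨mm, h⟩ else y ⟨mm, h⟩ := fun x y mm => rfl
  have hslice : ∀ y : {l : Fin d // ¬ l ∈ T} → ℝ,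
      volume ((fun x => (x, y)) ⁻¹' (e.symm ⁻¹' Z)) ≤ B.indicator (fun _ => c) y := by
    intro y
    by_cases hy : y ∈ B
    · rw [Set.indicator_of_mem hy]
      set zy : Fin d → ℝ := fun mm => if h : mm ∈ T then 0 else y ⟨mm, h⟩ with hzy
      have hsub : ((fun x => (x, y)) ⁻¹' (e.symm ⁻¹' Z)) ⊆
          Set.pi Set.univ (fun l : {l : Fin d // l ∈ T} =>
            Set.Icc (min ((-r - f l.1 zy)/(a l.1 l.2)) ((r - f l.1 zy)/(a l.1 l.2)))
                    (max ((-r - f l.1 zy)/(a l.1 l.2)) ((r - f l.1 zy)/(a l.1 l.2)))) := by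
        intro x hx
        simp only [Set.mem_preimage] at hx
        intro l _
        obtain ⟨-, h2⟩ := hx
        have hl := h2 l.1 l.2
        have h3 := haf l.1 l.2 (e.symm (x, y))
        have h4 : (e.symm (x, y)) l.1 = x l := by
          rw [hesymm, dif_pos l.2]
        have h5 : (fun m => if m ∈ T then 0 else e.symm (x, y) m) = zy := by
          funext mm
          by_cases hmm : mm ∈ T
          · simp [hmm, hzy]
          · simp [hmm, hzy, hesymm]
        have ha0 : a l.1 l.2 ≠ 0 := by
          intro h0
          have hb := haβ l.1 l.2
          rw [h0, abs_zero] at hb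
          linarith
        rw [h4, h5] at h3
        rw [h3] at hl
        exact abs_affine_mem ha0 hl
      calc volume ((fun x => (x, y)) ⁻¹' (e.symm ⁻¹' Z))
          ≤ volume (Set.pi Set.univ (fun l : {l : Fin d // l ∈ T} =>
              Set.Icc (min ((-r - f l.1 zy)/(a l.1 l.2)) ((r - f l.1 zy)/(a l.1 l.2)))
                      (max ((-r - f l.1 zy)/(a l.1 l.2)) ((r - f l.1 zy)/(a l.1 l.2))))) :=
            measure_mono hsub
        _ = ∏ l : {l : Fin d // l ∈ T}, volume (Set.Icc
              (min ((-r - f l.1 zy)/(a l.1 l.2)) ((r - f l.1 zy)/(a l.1 l.2)))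
              (max ((-r - f l.1 zy)/(a l.1 l.2)) ((r - f l.1 zy)/(a l.1 l.2)))) :=
            volume_pi_pi _
        _ ≤ ∏ _l : {l : Fin d // l ∈ T}, ENNReal.ofReal (2 * r / β) := by
            refine Finset.prod_le_prod' fun l _ => ?_
            rw [Real.volume_Icc]
            exact ENNReal.ofReal_le_ofReal (interval_len hβ hr (haβ l.1 l.2) _)
        _ = c := by
            rw [Finset.prod_const, Finset.card_univ, hc]
            congr 1
            exact Fintype.card_coe T
    · rw [Set.indicator_of_notMem hy]
      have hempty : ((fun x => (x, y)) ⁻¹' (e.symm ⁻¹' Z)) = ∅ := by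
        ext x
        simp only [Set.mem_preimage, Set.mem_empty_iff_false, iff_false]
        intro hx
        obtain ⟨h1, -⟩ := hx
        apply hy
        intro mm _
        have h2 := h1 mm.1 (Set.mem_univ mm.1)
        rw [hesymm, dif_neg mm.2] at h2
        exact h2
      rw [hempty]
      simp
  calc ∫⁻ y, volume ((fun x => (x, y)) ⁻¹' (e.symm ⁻¹' Z)) ∂volume
      ≤ ∫⁻ y, B.indicator (fun _ => c) y ∂volume := lintegral_mono hslice
    _ = c * volume B := lintegral_indicator_const hBm c
    _ ≤ c * 1 := by
        have hvB : volume B = 1 := by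
          rw [hB, volume_pi_pi]
          norm_num
        rw [hvB]
    _ = c := mul_one c

lemma idxPred_succ {d : ℕ} (m : Fin (d+1)) (hm : m ≠ 0) : (idxPred m hm).succ = m := by
  have h2 : (m : ℕ) ≠ 0 := fun h => hm (Fin.ext h)
  apply Fin.ext
  simp only [Fin.val_succ, idxPred]
  omega

lemma idxPred_of_succ {d : ℕ} (l : Fin d) (h : (l.succ : Fin (d+1)) ≠ 0) :
    idxPred l.succ h = l := by
  apply Fin.ext
  simp [idxPred]

end DplusAux


set_option maxHeartbeats 1000000 in
/-- uniform measure bound |D⁺(v,r)| < C·rⁱ for unit vectors v ∈ Λ^i ℝ^{d+1}. -/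
theorem measure_Dplus_lt
    (n d : ℕ) (hn : 2 ≤ n) (hd : 1 ≤ d) (hdn : d < n)
    (i : ℕ) (hi1 : 1 ≤ i) (hid : i ≤ d) :
    ∃ C : ℝ, 0 < C ∧ ∀ v : Lam (d+1) i, ‖v‖ = 1 → ∀ r : ℝ, 0 < r →
      volume {s : Fin d → ℝ | s ∈ Icube d ∧ ‖projPlus (extPow (uxMat d s) v)‖ ≤ r}
        < ENNReal.ofReal (C * r ^ i) := by
  classical
  set N : ℕ := Fintype.card (Idx (d+1) i) * i.factorial with hN
  obtain ⟨K0, hK0sub, hK0card⟩ := Finset.exists_subset_card_eq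
    (s := (Finset.univ : Finset (Fin (d+1))).erase 0) (n := i)
    (by rw [Finset.card_erase_of_mem (Finset.mem_univ _), Finset.card_univ, Fintype.card_fin]
        omega)
  have h0K0 : (0 : Fin (d+1)) ∉ K0 := fun h => (Finset.mem_erase.mp (hK0sub h)).1 rfl
  haveI hIne : Nonempty (Idx (d+1) i) := ⟨⟨K0, hK0card⟩⟩
  have hNpos : 0 < N := Nat.mul_pos Fintype.card_pos (Nat.factorial_pos i)
  have hNpos' : (0:ℝ) < (N:ℝ) := by exact_mod_cast hNpos
  set C : ℝ := (2*(N:ℝ))^d + 2^d + 2 with hC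
  have hCpos : 0 < C := by positivity
  refine ⟨C, hCpos, fun v hv r hr => ?_⟩
  have hCr : 0 < C * r ^ i := by positivity
  set w : (Fin d → ℝ) → Lam (d+1) i := fun s => extPow (uxMat d s) v with hw
  set S := {s : Fin d → ℝ | s ∈ Icube d ∧ ‖projPlus (w s)‖ ≤ r} with hS
  set P := Finset.univ.filter (fun K : Idx (d+1) i => (0 : Fin (d+1)) ∉ K.1) with hP
  have hPne : P.Nonempty := ⟨⟨K0, hK0card⟩, by
    rw [hP]
    exact Finset.mem_filter.mpr ⟨Finset.mem_univ _, h0K0⟩⟩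
  set β := P.sup' hPne (fun K => |v K|) with hβdef
  have hβle : ∀ K : Idx (d+1) i, (0 : Fin (d+1)) ∉ K.1 → |v K| ≤ β := by
    intro K hK
    have hKP : K ∈ P := by
      rw [hP]
      exact Finset.mem_filter.mpr ⟨Finset.mem_univ _, hK⟩
    exact Finset.le_sup' (fun K => |v K|) hKP
  obtain ⟨Kb, hKbP, hKbeq⟩ := Finset.exists_mem_eq_sup' hPne (fun K => |v K|)
  have hKb0 : (0 : Fin (d+1)) ∉ Kb.1 := by
    have h := hKbP
    rw [hP, Finset.mem_filter] at h
    exact h.2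
  have hvle : ∀ J : Idx (d+1) i, |v J| ≤ 1 := by
    intro J
    have h := norm_le_pi_norm v J
    rwa [hv, Real.norm_eq_abs] at h
  have hnormle : ∀ s : Fin d → ℝ, ∀ J : Idx (d+1) i, (0 : Fin (d+1)) ∈ J.1 →
      |w s J| ≤ ‖projPlus (w s)‖ := by
    intro s J h0J
    have h1 : projPlus (w s) J = w s J := if_pos h0J
    calc |w s J| = ‖projPlus (w s) J‖ := by rw [h1, Real.norm_eq_abs]
      _ ≤ ‖projPlus (w s)‖ := norm_le_pi_norm _ J
  rcases le_or_gt (1 / (N:ℝ)) β with hcase | hcase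
  · -- Case A
    have hβpos : 0 < β := lt_of_lt_of_le (by positivity) hcase
    set T : Finset (Fin d) := Finset.univ.filter (fun l : Fin d => l.succ ∈ Kb.1) with hT
    have hTmem : ∀ l : Fin d, l ∈ T ↔ l.succ ∈ Kb.1 := by
      intro l
      rw [hT, Finset.mem_filter]
      simp
    have hTcard : T.card = i := by
      rw [← Kb.2]
      apply Finset.card_bij (fun (l : Fin d) (_ : l ∈ T) => l.succ)
      · intro l hl
        exact (hTmem l).mp hl
      · intro l1 h1 l2 h2 h
        exact Fin.succ_injective d h
      · intro x hx
        have hx0 : x ≠ 0 := fun h => hKb0 (h ▸ hx)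
        refine ⟨DplusAux.idxPred x hx0, ?_, DplusAux.idxPred_succ x hx0⟩
        rw [hTmem, DplusAux.idxPred_succ x hx0]
        exact hx
    have hJlcard : ∀ l : Fin d, l ∈ T → (insert (0:Fin (d+1)) (Kb.1.erase l.succ)).card = i := by
      intro l hl
      rw [Finset.card_insert_of_notMem (fun h => hKb0 (Finset.mem_of_mem_erase h)),
        Finset.card_erase_of_mem ((hTmem l).mp hl), Kb.2]
      omega
    set f : Fin d → (Fin d → ℝ) → ℝ := fun l =>
      if hl : l ∈ T then
        (fun s => w s ⟨insert 0 (Kb.1.erase l.succ), hJlcard l hl⟩)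
      else fun _ => 0 with hfdef
    have hfval : ∀ l (hl : l ∈ T) (s : Fin d → ℝ),
        f l s = w s ⟨insert 0 (Kb.1.erase l.succ), hJlcard l hl⟩ := by
      intro l hl s
      simp only [hfdef, dif_pos hl]
    have hfc : ∀ l ∈ T, Continuous (f l) := by
      intro l hl
      have : f l = fun s => w s ⟨insert 0 (Kb.1.erase l.succ), hJlcard l hl⟩ :=
        funext fun s => hfval l hl s
      rw [this, hw]
      exact DplusAux.continuous_w v _
    have hfa : ∀ l ∈ T, ∃ a : ℝ, β ≤ |a| ∧ ∀ s : Fin d → ℝ,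
        f l s = a * s l + f l (fun m => if m ∈ T then 0 else s m) := by
      intro l hl
      have hj : (l.succ : Fin (d+1)) ∈ Kb.1 := (hTmem l).mp hl
      have hj0 : (l.succ : Fin (d+1)) ≠ 0 := Fin.succ_ne_zero l
      set J : Idx (d+1) i := ⟨insert 0 (Kb.1.erase l.succ), hJlcard l hl⟩ with hJdef
      have h0J : (0 : Fin (d+1)) ∈ J.1 := Finset.mem_insert_self _ _
      have hJer : J.1.erase 0 = Kb.1.erase l.succ :=
        Finset.erase_insert (fun h => hKb0 (Finset.mem_of_mem_erase h))
      have hjJ : (l.succ : Fin (d+1)) ∉ J.1 := by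
        rw [hJdef]
        simp only [Finset.mem_insert]
        rintro (h | h)
        · exact hj0 h
        · exact (Finset.mem_erase.mp h).1 rfl
      obtain ⟨ε, hε, hdet⟩ := DplusAux.det_submatrix_formula J Kb h0J hKb0
        (hJer ▸ Finset.erase_subset _ _) hj hjJ
      refine ⟨ε * v Kb, ?_, ?_⟩
      · have : |ε * v Kb| = |v Kb| := by
          rcases hε with h | h <;> rw [h] <;> simp [abs_mul]
        rw [this, ← hKbeq]
      · intro s
        rw [hfval l hl s, hfval l hl _]
        set zs : Fin d → ℝ := fun m => if m ∈ T then 0 else s m with hzs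
        have hsum : ∀ t : Fin d → ℝ, w t J =
            ∑ K : Idx (d+1) i,
              ((uxMat d t).submatrix (finsetEmb J) (finsetEmb K)).det * v K := fun _ => rfl
        have hdiff : w s J - w zs J = (ε * v Kb) * s l := by
          rw [hsum s, hsum zs, ← Finset.sum_sub_distrib]
          rw [Finset.sum_eq_single Kb]
          · rw [hdet s, hdet zs, DplusAux.idxPred_of_succ l hj0]
            have hzl : zs l = 0 := by
              rw [hzs]
              simp [hl]
            rw [hzl]
            ring
          · intro K' _ hK'
            have hXX : ((uxMat d s).submatrix (finsetEmb J) (finsetEmb K')).det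
                = ((uxMat d zs).submatrix (finsetEmb J) (finsetEmb K')).det := by
              by_cases hsub : Kb.1.erase l.succ ⊆ K'.1
              · by_cases h0K' : (0 : Fin (d+1)) ∈ K'.1
                · have hKJ : K' = J := by
                    apply Subtype.ext
                    refine (Finset.eq_of_subset_of_card_le ?_ ?_).symm
                    · rw [hJdef]
                      exact Finset.insert_subset h0K' hsub
                    · rw [K'.2, J.2]
                  rw [hKJ, DplusAux.det_submatrix_self, DplusAux.det_submatrix_self]
                · have hne : ¬ K'.1 ⊆ Kb.1.erase l.succ := by
                    intro hsub2
                    have hcard := Finset.card_le_card hsub2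
                    rw [K'.2, Finset.card_erase_of_mem hj, Kb.2] at hcard
                    omega
                  obtain ⟨m, hm1, hm2⟩ := Finset.not_subset.mp hne
                  have hm0 : m ≠ 0 := fun h => h0K' (h ▸ hm1)
                  have hmJ : m ∉ J.1 := by
                    rw [hJdef]
                    simp only [Finset.mem_insert]
                    rintro (h | h)
                    · exact hm0 h
                    · exact hm2 h
                  have hmne : m ≠ l.succ := by
                    rintro rfl
                    apply hK'
                    apply Subtype.ext
                    refine (Finset.eq_of_subset_of_card_le ?_ ?_).symm
                    · rw [← Finset.insert_erase hj]
                      exact Finset.insert_subset hm1 hsub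
                    · rw [K'.2, Kb.2]
                  have hmK : m ∉ Kb.1 := fun h => hm2 (Finset.mem_erase.mpr ⟨hmne, h⟩)
                  obtain ⟨ε', hε', hdet'⟩ := DplusAux.det_submatrix_formula J K' h0J h0K'
                    (hJer ▸ hsub) hm1 hmJ
                  rw [hdet' s, hdet' zs]
                  have hzz : zs (DplusAux.idxPred m hm0) = s (DplusAux.idxPred m hm0) := by
                    have hnotT : DplusAux.idxPred m hm0 ∉ T := by
                      rw [hTmem, DplusAux.idxPred_succ m hm0]
                      exact hmK
                    rw [hzs]
                    simp [hnotT]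
                  rw [hzz]
              · obtain ⟨x, hx1, hx2⟩ := Finset.not_subset.mp hsub
                have hxJ : x ∈ J.1 := by
                  rw [hJdef]
                  exact Finset.mem_insert_of_mem hx1
                have hx0 : x ≠ 0 := by
                  rintro rfl
                  exact hKb0 (Finset.mem_of_mem_erase hx1)
                rw [DplusAux.det_submatrix_zero s J K' hxJ hx2 hx0,
                  DplusAux.det_submatrix_zero zs J K' hxJ hx2 hx0]
            rw [hXX]
            ring
          · intro h
            exact absurd (Finset.mem_univ Kb) h
        have := hdiff
        linarith [hdiff]
    have hsubZ : S ⊆ {s : Fin d → ℝ | s ∈ Icube d ∧ ∀ l ∈ T, |f l s| ≤ r} := by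
      intro s hs
      obtain ⟨hs1, hs2⟩ := hs
      refine ⟨hs1, fun l hl => ?_⟩
      rw [hfval l hl s]
      exact le_trans (hnormle s _ (Finset.mem_insert_self _ _)) hs2
    have hmb := DplusAux.measure_bound T β r hβpos hr f hfc hfa
    have hN1' : (1:ℝ) ≤ (N:ℝ) := by exact_mod_cast hNpos
    have hstep : 2 * r / β ≤ 2 * (N:ℝ) * r := by
      rw [div_le_iff₀ hβpos]
      have h1 : 1 ≤ β * (N:ℝ) := (div_le_iff₀ hNpos').mp hcase
      nlinarith
    calc volume S ≤ ENNReal.ofReal (2 * r / β) ^ T.card :=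
          le_trans (measure_mono hsubZ) hmb
      _ = ENNReal.ofReal (2 * r / β) ^ i := by rw [hTcard]
      _ ≤ ENNReal.ofReal (2 * (N:ℝ) * r) ^ i := by
          gcongr
      _ = ENNReal.ofReal ((2 * (N:ℝ) * r) ^ i) := by
          rw [ENNReal.ofReal_pow (by positivity)]
      _ < ENNReal.ofReal (C * r ^ i) := by
          rw [ENNReal.ofReal_lt_ofReal_iff hCr]
          have h2 : (2 * (N:ℝ) * r) ^ i = (2 * (N:ℝ)) ^ i * r ^ i := by
            rw [mul_pow]
          rw [h2]
          have h3 : (2 * (N:ℝ)) ^ i ≤ (2 * (N:ℝ)) ^ d :=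
            pow_le_pow_right₀ (by linarith) hid
          have h4 : (2 * (N:ℝ)) ^ d < C := by
            rw [hC]
            have h5 : (0:ℝ) < 2 ^ d := by positivity
            linarith
          have h6 : (0:ℝ) < r ^ i := by positivity
          nlinarith
  · -- Case B
    obtain ⟨J, hJ⟩ := DplusAux.exists_norm_eq v
    rw [hv] at hJ
    have hN1 : 1 / (N:ℝ) ≤ 1 := by
      rw [div_le_one hNpos']
      exact_mod_cast hNpos
    have h0J : (0 : Fin (d+1)) ∈ J.1 := by
      by_contra h0
      have h1 : |v J| ≤ β := hβle J h0
      linarith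
    have hlow : ∀ s ∈ Icube d, (1:ℝ)/2 < |w s J| := by
      intro s hs
      have hs' : ∀ l, |s l| ≤ 1/2 := by
        intro l
        have h := hs l (Set.mem_univ l)
        exact abs_le.mpr ⟨h.1, h.2⟩
      have hwsum : w s J = ∑ K : Idx (d+1) i,
          ((uxMat d s).submatrix (finsetEmb J) (finsetEmb K)).det * v K := rfl
      have hsplit : w s J = v J + ∑ K ∈ Finset.univ.erase J,
          ((uxMat d s).submatrix (finsetEmb J) (finsetEmb K)).det * v K := by
        rw [hwsum, ← Finset.add_sum_erase _ _ (Finset.mem_univ J),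
          DplusAux.det_submatrix_self, one_mul]
      have hβ0 : (0:ℝ) ≤ β := le_trans (abs_nonneg (v Kb)) (hβle Kb hKb0)
      have hterm : ∀ K ∈ Finset.univ.erase J,
          |((uxMat d s).submatrix (finsetEmb J) (finsetEmb K)).det * v K|
            ≤ (i.factorial : ℝ)/2 * β := by
        intro K hK
        have hKJ : K ≠ J := (Finset.mem_erase.mp hK).1
        by_cases h0K : (0 : Fin (d+1)) ∈ K.1
        · have hdJK : ∃ x, x ∈ J.1 ∧ x ∉ K.1 := by
            by_contra hc
            push_neg at hc
            have hsub : J.1 ⊆ K.1 := fun x hx => hc x hx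
            have : J.1 = K.1 := Finset.eq_of_subset_of_card_le hsub (by rw [J.2, K.2])
            exact hKJ (Subtype.ext this.symm)
          obtain ⟨x, hx1, hx2⟩ := hdJK
          have hx0 : x ≠ 0 := by
            rintro rfl
            exact hx2 h0K
          rw [DplusAux.det_submatrix_zero s J K hx1 hx2 hx0, zero_mul, abs_zero]
          have : (0:ℝ) ≤ (i.factorial : ℝ)/2 := by positivity
          nlinarith
        · rw [abs_mul]
          have h1 := DplusAux.abs_det_submatrix_le hs' J K h0J h0K
          have h2 := hβle K h0K
          exact mul_le_mul h1 h2 (abs_nonneg _) (by positivity)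
      have hrest : |∑ K ∈ Finset.univ.erase J,
          ((uxMat d s).submatrix (finsetEmb J) (finsetEmb K)).det * v K|
          ≤ (N:ℝ) * β / 2 := by
        have hb1 : |∑ K ∈ Finset.univ.erase J,
            ((uxMat d s).submatrix (finsetEmb J) (finsetEmb K)).det * v K|
            ≤ ∑ K ∈ Finset.univ.erase J,
              |((uxMat d s).submatrix (finsetEmb J) (finsetEmb K)).det * v K| :=
          Finset.abs_sum_le_sum_abs _ _
        have hb2 : ∑ K ∈ Finset.univ.erase J,
            |((uxMat d s).submatrix (finsetEmb J) (finsetEmb K)).det * v K|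
            ≤ ∑ _K ∈ Finset.univ.erase J, ((i.factorial : ℝ)/2 * β) :=
          Finset.sum_le_sum hterm
        have hb3 : ∑ _K ∈ Finset.univ.erase J, ((i.factorial : ℝ)/2 * β)
            = ((Finset.univ.erase J).card : ℝ) * ((i.factorial : ℝ)/2 * β) := by
          rw [Finset.sum_const, nsmul_eq_mul]
        have hcard : ((Finset.univ.erase J).card : ℝ)
            ≤ (Fintype.card (Idx (d+1) i) : ℝ) := by
          exact_mod_cast Finset.card_le_card (Finset.erase_subset _ _)
        have hfac : (0:ℝ) < (i.factorial : ℝ) := by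
          exact_mod_cast Nat.factorial_pos i
        have hNeq : (N:ℝ) = (Fintype.card (Idx (d+1) i) : ℝ) * (i.factorial : ℝ) := by
          rw [hN]
          push_cast
          ring
        have hstep2 : ((Finset.univ.erase J).card : ℝ) * ((i.factorial : ℝ)/2 * β)
            ≤ (Fintype.card (Idx (d+1) i) : ℝ) * ((i.factorial : ℝ)/2 * β) :=
          mul_le_mul_of_nonneg_right hcard (mul_nonneg (by positivity) hβ0)
        rw [hNeq]
        nlinarith
      have hNβ : (N:ℝ) * β / 2 < 1/2 := by
        have h1 : β * (N:ℝ) < 1 := by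
          rw [← lt_div_iff₀ hNpos']
          exact hcase
        nlinarith
      have h4 : |v J| ≤ |w s J| + |∑ K ∈ Finset.univ.erase J,
          ((uxMat d s).submatrix (finsetEmb J) (finsetEmb K)).det * v K| := by
        rw [hsplit]
        have := abs_add_le (v J + ∑ K ∈ Finset.univ.erase J,
            ((uxMat d s).submatrix (finsetEmb J) (finsetEmb K)).det * v K)
          (-(∑ K ∈ Finset.univ.erase J,
            ((uxMat d s).submatrix (finsetEmb J) (finsetEmb K)).det * v K))
        simp only [add_neg_cancel_right, abs_neg] at this
        exact this
      linarith
    rcases lt_or_ge r (1/2) with hr2 | hr2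
    · have hSempty : S = ∅ := by
        ext s
        simp only [hS, Set.mem_setOf_eq, Set.mem_empty_iff_false, iff_false]
        rintro ⟨hs1, hs2⟩
        have h1 := hlow s hs1
        have h2 : |w s J| ≤ r := le_trans (hnormle s J h0J) hs2
        linarith
      rw [hSempty]
      simpa using ENNReal.ofReal_pos.mpr hCr
    · have h1 : volume S ≤ 1 := by
        have hsub : S ⊆ Icube d := fun s hs => hs.1
        calc volume S ≤ volume (Icube d) := measure_mono hsub
          _ = 1 := by
            rw [Icube, volume_pi_pi]
            norm_num
      have h2 : (1:ℝ≥0∞) < ENNReal.ofReal (C * r^i) := by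
        rw [← ENNReal.ofReal_one, ENNReal.ofReal_lt_ofReal_iff hCr]
        have h3 : (1/2:ℝ)^d ≤ r^i :=
          le_trans (pow_le_pow_of_le_one (by norm_num) (by norm_num) hid)
            (pow_le_pow_left₀ (by norm_num) hr2 i)
        have h4 : (2:ℝ)^d < C := by
          rw [hC]
          have : (0:ℝ) < (2*(N:ℝ))^d := by positivity
          linarith
        have h5 : (2:ℝ)^d * (1/2)^d = 1 := by
          rw [← mul_pow]
          norm_num
        have h6 : C * (1/2:ℝ)^d ≤ C * r^i :=
          mul_le_mul_of_nonneg_left h3 (le_of_lt hCpos)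
        have h7 : (2:ℝ)^d * (1/2)^d < C * (1/2)^d :=
          mul_lt_mul_of_pos_right h4 (by positivity)
        calc (1:ℝ) = (2:ℝ)^d * (1/2)^d := h5.symm
          _ < C * (1/2)^d := h7
          _ ≤ C * r^i := h6
      exact lt_of_le_of_lt h1 h2
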